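/- For every t>0 and S>0, the Black–Scholes formula 𝓑𝓢 satisfies the risk-free Black–Scholes equation: ∂_t𝓑𝓢(t,S) − (σ²S²/2)∂_{SS}𝓑𝓢(t,S) − r_R S ∂_S𝓑𝓢(t,S) + r 𝓑𝓢(t,S) = 0. -/

import Mathlib

/-- Standard normal cumulative distribution function. -/
noncomputable def Phi (x : ℝ) : ℝ :=
  (Real.sqrt (2 * Real.pi))⁻¹ * ∫ u in Set.Iic x, Real.exp (-u ^ 2 / 2)

/-- `ζ₁ = (log(S/K) + (r_R + σ²/2)t)/(σ√t)`. -/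
noncomputable def zeta1 (σ K r_R t S : ℝ) : ℝ :=
  (Real.log (S / K) + (r_R + σ ^ 2 / 2) * t) / (σ * Real.sqrt t)

/-- `ζ₂ = ζ₁ − σ√t`. -/
noncomputable def zeta2 (σ K r_R t S : ℝ) : ℝ :=
  zeta1 σ K r_R t S - σ * Real.sqrt t

/-- The Black–Scholes formula
`𝓑𝓢(t,S) = α S e^{−(r−r_R)t} Φ(αζ₁) − α K e^{−rt} Φ(αζ₂)` (t = time to maturity). -/
noncomputable def BS (σ K r r_R α t S : ℝ) : ℝ :=
  α * S * Real.exp (-(r - r_R) * t) * Phi (α * zeta1 σ K r_R t S)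
    - α * K * Real.exp (-r * t) * Phi (α * zeta2 σ K r_R t S)

noncomputable def phiG (x : ℝ) : ℝ := (Real.sqrt (2 * Real.pi))⁻¹ * Real.exp (-x ^ 2 / 2)

lemma integrable_gauss : MeasureTheory.Integrable (fun u : ℝ => Real.exp (-u ^ 2 / 2)) := by
  have h := integrable_exp_neg_mul_sq (show (0:ℝ) < 1/2 by norm_num)
  have he : (fun u : ℝ => Real.exp (-u ^ 2 / 2)) = fun u : ℝ => Real.exp (-(1/2) * u ^ 2) := by
    funext u; ring_nf
  rw [he]; exact h

lemma continuous_gauss : Continuous (fun u : ℝ => Real.exp (-u ^ 2 / 2)) := by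
  continuity

lemma hasDerivAt_Phi (x : ℝ) : HasDerivAt Phi (phiG x) x := by
  have hfun : Phi = fun y =>
      (Real.sqrt (2 * Real.pi))⁻¹ * (∫ u in Set.Iic (0:ℝ), Real.exp (-u ^ 2 / 2))
      + (Real.sqrt (2 * Real.pi))⁻¹ * ∫ u in (0:ℝ)..y, Real.exp (-u ^ 2 / 2) := by
    funext y
    rw [← intervalIntegral.integral_Iic_sub_Iic integrable_gauss.integrableOn
      integrable_gauss.integrableOn]
    unfold Phi; ring
  have hd : HasDerivAt (fun y => ∫ u in (0:ℝ)..y, Real.exp (-u ^ 2 / 2))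
      (Real.exp (-x ^ 2 / 2)) x :=
    intervalIntegral.integral_hasDerivAt_right
      (continuous_gauss.intervalIntegrable 0 x)
      (continuous_gauss.stronglyMeasurableAtFilter _ _)
      continuous_gauss.continuousAt
  rw [hfun]
  exact ((hd.const_mul _).const_add _)

lemma hasDerivAt_zeta1_S (σ K r_R t S : ℝ) (hK : 0 < K) (hS : 0 < S) :
    HasDerivAt (fun s => zeta1 σ K r_R t s) (1 / S / (σ * Real.sqrt t)) S := by
  have h0 : HasDerivAt (fun s : ℝ => s / K) (1 / K) S := by
    simpa using (hasDerivAt_id S).div_const K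
  have h1 : HasDerivAt (fun s : ℝ => Real.log (s / K)) (1 / S) S := by
    have := (Real.hasDerivAt_log (div_ne_zero hS.ne' hK.ne')).comp S h0
    have e : (S / K)⁻¹ * (1 / K) = 1 / S := by field_simp
    rw [e] at this
    exact this
  exact ((h1.add_const _).div_const _)

lemma hasDerivAt_zeta2_S (σ K r_R t S : ℝ) (hK : 0 < K) (hS : 0 < S) :
    HasDerivAt (fun s => zeta2 σ K r_R t s) (1 / S / (σ * Real.sqrt t)) S :=
  (hasDerivAt_zeta1_S σ K r_R t S hK hS).sub_const _

lemma hasDerivAt_zeta1_t (σ K r_R t S : ℝ) (hσ : 0 < σ) (ht : 0 < t) :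
    HasDerivAt (fun τ => zeta1 σ K r_R τ S)
      (((r_R + σ ^ 2 / 2) * (σ * Real.sqrt t)
        - (Real.log (S / K) + (r_R + σ ^ 2 / 2) * t) * (σ * (1 / (2 * Real.sqrt t))))
        / (σ * Real.sqrt t) ^ 2) t := by
  have hst : 0 < Real.sqrt t := Real.sqrt_pos.mpr ht
  have hnum : HasDerivAt (fun τ : ℝ => Real.log (S / K) + (r_R + σ ^ 2 / 2) * τ)
      (r_R + σ ^ 2 / 2) t := by
    simpa using ((hasDerivAt_id t).const_mul (r_R + σ ^ 2 / 2)).const_add (Real.log (S / K))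
  have hden : HasDerivAt (fun τ : ℝ => σ * Real.sqrt τ) (σ * (1 / (2 * Real.sqrt t))) t :=
    (Real.hasDerivAt_sqrt ht.ne').const_mul σ
  exact hnum.div hden (by positivity)

lemma hasDerivAt_zeta2_t (σ K r_R t S : ℝ) (hσ : 0 < σ) (ht : 0 < t) :
    HasDerivAt (fun τ => zeta2 σ K r_R τ S)
      (((r_R + σ ^ 2 / 2) * (σ * Real.sqrt t)
        - (Real.log (S / K) + (r_R + σ ^ 2 / 2) * t) * (σ * (1 / (2 * Real.sqrt t))))
        / (σ * Real.sqrt t) ^ 2 - σ * (1 / (2 * Real.sqrt t))) t :=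
  (hasDerivAt_zeta1_t σ K r_R t S hσ ht).sub
    ((Real.hasDerivAt_sqrt ht.ne').const_mul σ)

lemma key_sq (σ K r_R t S : ℝ) (hσ : 0 < σ) (ht : 0 < t) :
    zeta1 σ K r_R t S ^ 2 = zeta2 σ K r_R t S ^ 2 + 2 * (Real.log (S / K) + r_R * t) := by
  obtain ⟨u, hu, rfl⟩ : ∃ u : ℝ, 0 < u ∧ t = u ^ 2 :=
    ⟨Real.sqrt t, Real.sqrt_pos.mpr ht, (Real.sq_sqrt ht.le).symm⟩
  unfold zeta2 zeta1
  rw [Real.sqrt_sq hu.le]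
  field_simp
  ring

lemma key_exp (σ K r r_R t S : ℝ) (hσ : 0 < σ) (hK : 0 < K) (ht : 0 < t) (hS : 0 < S) :
    S * Real.exp (-(r - r_R) * t) * Real.exp (-zeta1 σ K r_R t S ^ 2 / 2)
      = K * Real.exp (-r * t) * Real.exp (-zeta2 σ K r_R t S ^ 2 / 2) := by
  have h2 := key_sq σ K r_R t S hσ ht
  have hL : Real.exp (Real.log (S / K)) = S / K := Real.exp_log (div_pos hS hK)
  have h3 : -zeta1 σ K r_R t S ^ 2 / 2
      = -zeta2 σ K r_R t S ^ 2 / 2 + (-(Real.log (S / K)) + -(r_R * t)) := by linarith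
  rw [h3, Real.exp_add, Real.exp_add, Real.exp_neg, hL]
  rw [show -(r - r_R) * t = -r * t + r_R * t by ring, Real.exp_add, Real.exp_neg]
  have h1 : Real.exp (r_R * t) ≠ 0 := Real.exp_ne_zero _
  field_simp

lemma key_phi (σ K r r_R α t S : ℝ) (hσ : 0 < σ) (hK : 0 < K)
    (hα : α = 1 ∨ α = -1) (ht : 0 < t) (hS : 0 < S) :
    S * Real.exp (-(r - r_R) * t) * phiG (α * zeta1 σ K r_R t S)
      = K * Real.exp (-r * t) * phiG (α * zeta2 σ K r_R t S) := by
  have hα2 : α ^ 2 = 1 := by rcases hα with rfl | rfl <;> norm_num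
  unfold phiG
  rw [mul_pow, hα2, one_mul, mul_pow, hα2, one_mul]
  linear_combination (Real.sqrt (2 * Real.pi))⁻¹ * key_exp σ K r r_R t S hσ hK ht hS

lemma phiG2_eq (σ K r r_R α t S : ℝ) (hσ : 0 < σ) (hK : 0 < K)
    (hα : α = 1 ∨ α = -1) (ht : 0 < t) (hS : 0 < S) :
    phiG (α * zeta2 σ K r_R t S)
      = S * Real.exp (-(r - r_R) * t) * phiG (α * zeta1 σ K r_R t S)
        / (K * Real.exp (-r * t)) := by
  rw [key_phi σ K r r_R α t S hσ hK hα ht hS]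
  field_simp

lemma hasDerivAt_BS_S (σ K r r_R α t : ℝ) (hσ : 0 < σ) (hK : 0 < K)
    (hα : α = 1 ∨ α = -1) (ht : 0 < t) :
    ∀ S, 0 < S → HasDerivAt (fun s => BS σ K r r_R α t s)
      (α * Real.exp (-(r - r_R) * t) * Phi (α * zeta1 σ K r_R t S)) S := by
  intro S hS
  have hst : 0 < Real.sqrt t := Real.sqrt_pos.mpr ht
  have hz1 := hasDerivAt_zeta1_S σ K r_R t S hK hS
  have hz2 := hasDerivAt_zeta2_S σ K r_R t S hK hS
  have hP1 : HasDerivAt (fun s => Phi (α * zeta1 σ K r_R t s))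
      (phiG (α * zeta1 σ K r_R t S) * (α * (1 / S / (σ * Real.sqrt t)))) S :=
    (hasDerivAt_Phi _).comp S (hz1.const_mul α)
  have hP2 : HasDerivAt (fun s => Phi (α * zeta2 σ K r_R t s))
      (phiG (α * zeta2 σ K r_R t S) * (α * (1 / S / (σ * Real.sqrt t)))) S :=
    (hasDerivAt_Phi _).comp S (hz2.const_mul α)
  have h1 : HasDerivAt (fun s : ℝ => α * s * Real.exp (-(r - r_R) * t))
      (α * Real.exp (-(r - r_R) * t)) S := by
    simpa using ((hasDerivAt_id S).const_mul α).mul_const (Real.exp (-(r - r_R) * t))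
  have hD := (h1.mul hP1).sub ((hP2.const_mul (α * K * Real.exp (-r * t))))
  have hval : α * Real.exp (-(r - r_R) * t) * Phi (α * zeta1 σ K r_R t S)
        + α * S * Real.exp (-(r - r_R) * t)
          * (phiG (α * zeta1 σ K r_R t S) * (α * (1 / S / (σ * Real.sqrt t))))
      - α * K * Real.exp (-r * t)
          * (phiG (α * zeta2 σ K r_R t S) * (α * (1 / S / (σ * Real.sqrt t))))
      = α * Real.exp (-(r - r_R) * t) * Phi (α * zeta1 σ K r_R t S) := by
    rw [phiG2_eq σ K r r_R α t S hσ hK hα ht hS]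
    field_simp
    ring
  rw [← hval]
  unfold BS
  exact hD


/-- The Black–Scholes formula satisfies the risk-free Black–Scholes PDE
on `(0,∞)×(0,∞)`. -/
theorem BS_solves_BS_pde
    (σ K r r_R α : ℝ) (hσ : 0 < σ) (hK : 0 < K) (hα : α = 1 ∨ α = -1) :
    ∀ t > (0 : ℝ), ∀ S > (0 : ℝ),
      deriv (fun τ => BS σ K r r_R α τ S) t
        - σ ^ 2 * S ^ 2 / 2 * deriv (deriv (fun s => BS σ K r r_R α t s)) S
        - r_R * S * deriv (fun s => BS σ K r r_R α t s) S
        + r * BS σ K r r_R α t S = 0 := by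
  intro t ht S hS
  have hst : 0 < Real.sqrt t := Real.sqrt_pos.mpr ht
  have hderS : deriv (fun s => BS σ K r r_R α t s) S
      = α * Real.exp (-(r - r_R) * t) * Phi (α * zeta1 σ K r_R t S) :=
    (hasDerivAt_BS_S σ K r r_R α t hσ hK hα ht S hS).deriv
  have hev : deriv (fun s => BS σ K r r_R α t s)
      =ᶠ[nhds S] fun s => α * Real.exp (-(r - r_R) * t) * Phi (α * zeta1 σ K r_R t s) := by
    filter_upwards [Ioi_mem_nhds hS] with s hs
    exact (hasDerivAt_BS_S σ K r r_R α t hσ hK hα ht s hs).deriv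
  have hg : HasDerivAt
      (fun s => α * Real.exp (-(r - r_R) * t) * Phi (α * zeta1 σ K r_R t s))
      (α * Real.exp (-(r - r_R) * t)
        * (phiG (α * zeta1 σ K r_R t S) * (α * (1 / S / (σ * Real.sqrt t))))) S :=
    ((hasDerivAt_Phi _).comp S
      ((hasDerivAt_zeta1_S σ K r_R t S hK hS).const_mul α)).const_mul
      (α * Real.exp (-(r - r_R) * t))
  have hderSS : deriv (deriv (fun s => BS σ K r r_R α t s)) S
      = α * Real.exp (-(r - r_R) * t)
        * (phiG (α * zeta1 σ K r_R t S) * (α * (1 / S / (σ * Real.sqrt t)))) := by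
    rw [hev.deriv_eq]
    exact hg.deriv
  have hE1t : HasDerivAt (fun τ : ℝ => Real.exp (-(r - r_R) * τ))
      (Real.exp (-(r - r_R) * t) * -(r - r_R)) t := by
    simpa using (((hasDerivAt_id t).const_mul (-(r - r_R))).exp)
  have hE2t : HasDerivAt (fun τ : ℝ => Real.exp (-r * τ))
      (Real.exp (-r * t) * -r) t := by
    simpa using (((hasDerivAt_id t).const_mul (-r)).exp)
  have hA : HasDerivAt (fun τ : ℝ => α * S * Real.exp (-(r - r_R) * τ))
      (α * S * (Real.exp (-(r - r_R) * t) * -(r - r_R))) t := hE1t.const_mul (α * S)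
  have hB : HasDerivAt (fun τ : ℝ => α * K * Real.exp (-r * τ))
      (α * K * (Real.exp (-r * t) * -r)) t := hE2t.const_mul (α * K)
  have hP1t : HasDerivAt (fun τ => Phi (α * zeta1 σ K r_R τ S))
      (phiG (α * zeta1 σ K r_R t S)
        * (α * (((r_R + σ ^ 2 / 2) * (σ * Real.sqrt t)
        - (Real.log (S / K) + (r_R + σ ^ 2 / 2) * t) * (σ * (1 / (2 * Real.sqrt t))))
        / (σ * Real.sqrt t) ^ 2))) t :=
    (hasDerivAt_Phi _).comp t ((hasDerivAt_zeta1_t σ K r_R t S hσ ht).const_mul α)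
  have hP2t : HasDerivAt (fun τ => Phi (α * zeta2 σ K r_R τ S))
      (phiG (α * zeta2 σ K r_R t S)
        * (α * (((r_R + σ ^ 2 / 2) * (σ * Real.sqrt t)
        - (Real.log (S / K) + (r_R + σ ^ 2 / 2) * t) * (σ * (1 / (2 * Real.sqrt t))))
        / (σ * Real.sqrt t) ^ 2 - σ * (1 / (2 * Real.sqrt t))))) t :=
    (hasDerivAt_Phi _).comp t ((hasDerivAt_zeta2_t σ K r_R t S hσ ht).const_mul α)
  have hT : HasDerivAt (fun τ => BS σ K r r_R α τ S)
      ((α * S * (Real.exp (-(r - r_R) * t) * -(r - r_R)) * Phi (α * zeta1 σ K r_R t S)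
        + α * S * Real.exp (-(r - r_R) * t)
          * (phiG (α * zeta1 σ K r_R t S)
            * (α * (((r_R + σ ^ 2 / 2) * (σ * Real.sqrt t)
              - (Real.log (S / K) + (r_R + σ ^ 2 / 2) * t) * (σ * (1 / (2 * Real.sqrt t))))
              / (σ * Real.sqrt t) ^ 2))))
        - (α * K * (Real.exp (-r * t) * -r) * Phi (α * zeta2 σ K r_R t S)
        + α * K * Real.exp (-r * t)
          * (phiG (α * zeta2 σ K r_R t S)
            * (α * (((r_R + σ ^ 2 / 2) * (σ * Real.sqrt t)
              - (Real.log (S / K) + (r_R + σ ^ 2 / 2) * t) * (σ * (1 / (2 * Real.sqrt t))))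
              / (σ * Real.sqrt t) ^ 2 - σ * (1 / (2 * Real.sqrt t))))))) t := by
    unfold BS
    exact (hA.mul hP1t).sub (hB.mul hP2t)
  rw [hT.deriv, hderSS, hderS]
  unfold BS
  rw [phiG2_eq σ K r r_R α t S hσ hK hα ht hS]
  have hE2 : Real.exp (-r * t) ≠ 0 := Real.exp_ne_zero _
  field_simp
  ring
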